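/- arXiv:1208.3167 — 2 statements merged into one kernel-verified Lean document; each statement's English description precedes it below -/
import Mathlib

section
/- A numerical semigroup S with multiplicity e and blowup B is additive (i.e., ord(u + e; S) = ord(u; S) + 1 for all u ∈ S) if and only if adj(S) = Ap(B; e), where adj(s) = s − ord(s;S)·e. -/
open Finset

/-- The set of factorizations of `n` over the generating tuple `g`. -/
def Fac {t : ℕ} (g : Fin (t + 1) → ℕ) (n : ℕ) : Set (Fin (t + 1) → ℕ) :=
  {c | ∑ i, c i * g i = n}

/-- The numerical semigroup generated by the tuple `g`. -/
def Sg {t : ℕ} (g : Fin (t + 1) → ℕ) : Set ℕ :=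
  {n | ∃ c : Fin (t + 1) → ℕ, ∑ i, c i * g i = n}

/-- The order of `n`: the maximal length of a factorization of `n` over `g`. -/
noncomputable def ordOf {t : ℕ} (g : Fin (t + 1) → ℕ) (n : ℕ) : ℕ :=
  sSup {r | ∃ c ∈ Fac g n, ∑ i, c i = r}

/-- The minimal length of a factorization of `n` over `g`. -/
noncomputable def minordOf {t : ℕ} (g : Fin (t + 1) → ℕ) (n : ℕ) : ℕ :=
  sInf {r | ∃ c ∈ Fac g n, ∑ i, c i = r}

/-- The denumerant of `n` with respect to `g`. -/
noncomputable def denum {t : ℕ} (g : Fin (t + 1) → ℕ) (n : ℕ) : ℕ :=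
  (Fac g n).ncard

/-- The maximal denumerant of an element: the number of maximal-length factorizations. -/
noncomputable def dmaxEl {t : ℕ} (g : Fin (t + 1) → ℕ) (n : ℕ) : ℕ :=
  {c ∈ Fac g n | ∑ i, c i = ordOf g n}.ncard

/-- The maximal denumerant of the semigroup generated by `g`. -/
noncomputable def dmax {t : ℕ} (g : Fin (t + 1) → ℕ) : ℕ :=
  sSup {m | ∃ n ∈ Sg g, dmaxEl g n = m}

/-- The generating tuple `D` of the blowup: `{e, a₁ - e, …, a_t - e}`. -/
def blowD {t : ℕ} (g : Fin (t + 1) → ℕ) : Fin (t + 1) → ℕ :=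
  fun i => if i = 0 then g 0 else g i - g 0

/-- The adjustment of `n`:  `n - ord(n) * e`. -/
noncomputable def adj {t : ℕ} (g : Fin (t + 1) → ℕ) (n : ℕ) : ℕ :=
  n - ordOf g n * g 0

/-- The Apery set with respect to `u` of the semigroup generated by `g`. -/
def Ap {t : ℕ} (g : Fin (t + 1) → ℕ) (u : ℕ) : Set ℕ :=
  {w ∈ Sg g | ¬ ∃ b ∈ Sg g, w = b + u}

/-- `g` is the (strictly increasing) minimal generating tuple of a numerical semigroup
with multiplicity `g 0`. -/
structure IsNumSgp {t : ℕ} (g : Fin (t + 1) → ℕ) : Prop where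
  mono : StrictMono g
  pos : 0 < g 0
  gcd_eq_one : Finset.gcd Finset.univ g = 1
  minimal : ∀ i, ∀ c : Fin (t + 1) → ℕ, ∑ j, c j * g j = g i → c = Pi.single i 1

/-- `S` is additive: `ord(u + e) = ord(u) + 1` for all `u ∈ S`. -/
def IsAdditive {t : ℕ} (g : Fin (t + 1) → ℕ) : Prop :=
  ∀ u ∈ Sg g, ordOf g (u + g 0) = ordOf g u + 1

/-- Membership of an integer in a set of naturals. -/
def ZMem (T : Set ℕ) (z : ℤ) : Prop := 0 ≤ z ∧ z.toNat ∈ T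

/-- The Frobenius number: the largest integer not in `T`. -/
noncomputable def Frob (T : Set ℕ) : ℤ := sSup {z : ℤ | ¬ ZMem T z}

/-- `T` is symmetric: whenever `x + y = F(T)`, exactly one of `x`, `y` lies in `T`. -/
def Symm (T : Set ℕ) : Prop := ∀ x y : ℤ, x + y = Frob T → (ZMem T x ↔ ¬ ZMem T y)

/-- An abstract numerical semigroup. -/
structure IsNumSemigroup (T : Set ℕ) : Prop where
  zero_mem : 0 ∈ T
  add_mem : ∀ a ∈ T, ∀ b ∈ T, a + b ∈ T
  cofinite : Tᶜ.Finite

/-- The Apery set of an abstract numerical semigroup. -/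
def ApS (T : Set ℕ) (u : ℕ) : Set ℕ := {w ∈ T | ¬ ∃ b ∈ T, w = b + u}

section
variable {t : ℕ} {g : Fin (t + 1) → ℕ}

lemma sum_bump (c : Fin (t+1) → ℕ) (r : ℕ) (f : Fin (t+1) → ℕ) :
    ∑ i, (if i = 0 then c 0 + r else c i) * f i = ∑ i, c i * f i + r * f 0 := by
  rw [Fin.sum_univ_succ, Fin.sum_univ_succ (f := fun i => c i * f i)]
  simp only [Fin.succ_ne_zero, if_false, if_pos]
  ring

lemma sum_bump_len (c : Fin (t+1) → ℕ) (r : ℕ) :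
    ∑ i, (if i = 0 then c 0 + r else c i) = ∑ i, c i + r := by
  rw [Fin.sum_univ_succ, Fin.sum_univ_succ (f := fun i => c i)]
  simp only [Fin.succ_ne_zero, if_false, if_pos]
  ring

lemma sum_zero0 (c : Fin (t+1) → ℕ) (f : Fin (t+1) → ℕ) :
    ∑ i, (if i = 0 then 0 else c i) * f i = ∑ i : Fin t, c i.succ * f i.succ := by
  rw [Fin.sum_univ_succ]
  simp [Fin.succ_ne_zero]

lemma single_sum (j : Fin (t+1)) (f : Fin (t+1) → ℕ) :
    ∑ i, (Pi.single j 1 : Fin (t+1) → ℕ) i * f i = f j := by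
  simp [Pi.single_apply, ite_mul]

lemma key_id (hle : ∀ i, g 0 ≤ g i) (c : Fin (t+1) → ℕ) :
    ∑ i, c i * g i = ∑ i, c i * blowD g i + (∑ i : Fin t, c i.succ) * g 0 := by
  have h : ∀ i : Fin t, c i.succ * g i.succ = c i.succ * blowD g i.succ + c i.succ * g 0 := by
    intro i
    have hb : blowD g i.succ = g i.succ - g 0 := by
      simp [blowD, Fin.succ_ne_zero]
    rw [hb, ← Nat.mul_add, Nat.sub_add_cancel (hle _)]
  have h0 : blowD g 0 = g 0 := by simp [blowD]
  rw [Fin.sum_univ_succ, Fin.sum_univ_succ (f := fun i => c i * blowD g i),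
    Finset.sum_congr rfl fun i _ => h i, Finset.sum_add_distrib, ← Finset.sum_mul, h0]
  ring

lemma g_pos (hm : StrictMono g) (hp : 0 < g 0) (i : Fin (t+1)) : 0 < g i :=
  lt_of_lt_of_le hp (hm.monotone (Fin.zero_le i))

lemma bddAbove_len (hp : ∀ i, 0 < g i) (n : ℕ) :
    BddAbove {r | ∃ c ∈ Fac g n, ∑ i, c i = r} := by
  refine ⟨n, fun r hr => ?_⟩
  obtain ⟨c, hc, rfl⟩ := hr
  calc ∑ i, c i ≤ ∑ i, c i * g i :=
        Finset.sum_le_sum fun i _ => Nat.le_mul_of_pos_right _ (hp i)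
    _ = n := hc

lemma le_ordOf (hp : ∀ i, 0 < g i) {n : ℕ} {c : Fin (t+1) → ℕ}
    (hc : ∑ i, c i * g i = n) : ∑ i, c i ≤ ordOf g n :=
  le_csSup (bddAbove_len hp n) ⟨c, hc, rfl⟩

lemma ordOf_spec (hp : ∀ i, 0 < g i) {n : ℕ} (hn : n ∈ Sg g) :
    ∃ c : Fin (t+1) → ℕ, ∑ i, c i * g i = n ∧ ∑ i, c i = ordOf g n := by
  obtain ⟨c, hc⟩ := hn
  have hne : {r | ∃ c ∈ Fac g n, ∑ i, c i = r}.Nonempty := ⟨∑ i, c i, c, hc, rfl⟩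
  obtain ⟨c', hc', h'⟩ := Nat.sSup_mem hne (bddAbove_len hp n)
  exact ⟨c', hc', h'⟩

lemma ord_mul_le (hp : ∀ i, 0 < g i) (hle : ∀ i, g 0 ≤ g i) {n : ℕ} (hn : n ∈ Sg g) :
    ordOf g n * g 0 ≤ n := by
  obtain ⟨c, hc, hord⟩ := ordOf_spec hp hn
  rw [← hord, Finset.sum_mul]
  calc ∑ i, c i * g 0 ≤ ∑ i, c i * g i :=
        Finset.sum_le_sum fun i _ => Nat.mul_le_mul_left _ (hle i)
    _ = n := hc

lemma adj_add (hp : ∀ i, 0 < g i) (hle : ∀ i, g 0 ≤ g i) {n : ℕ} (hn : n ∈ Sg g) :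
    adj g n + ordOf g n * g 0 = n :=
  Nat.sub_add_cancel (ord_mul_le hp hle hn)

lemma adj_mem_B (hp : ∀ i, 0 < g i) (hle : ∀ i, g 0 ≤ g i) {n : ℕ} (hn : n ∈ Sg g) :
    adj g n ∈ Sg (blowD g) := by
  obtain ⟨c, hc, hord⟩ := ordOf_spec hp hn
  refine ⟨fun i => if i = 0 then 0 else c i, ?_⟩
  have hid := key_id hle c
  have hsplit : ∑ i, c i * blowD g i
      = c 0 * g 0 + ∑ i : Fin t, c i.succ * blowD g i.succ := by
    rw [Fin.sum_univ_succ]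
    simp [blowD]
  have hlen : ∑ i, c i = c 0 + ∑ i : Fin t, c i.succ := Fin.sum_univ_succ c
  have hz : ∑ i, (if i = 0 then 0 else c i) * blowD g i
      = ∑ i : Fin t, c i.succ * blowD g i.succ := sum_zero0 c (blowD g)
  rw [hz]
  have h1 : n = (∑ i : Fin t, c i.succ * blowD g i.succ) + ordOf g n * g 0 := by
    rw [← hord, hlen, ← hc, hid, hsplit]
    ring
  show _ = adj g n
  unfold adj
  omega

lemma Sg_add (f : Fin (t+1) → ℕ) {a b : ℕ} (ha : a ∈ Sg f) (hb : b ∈ Sg f) :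
    a + b ∈ Sg f := by
  obtain ⟨c, hc⟩ := ha; obtain ⟨d, hd⟩ := hb
  exact ⟨fun i => c i + d i, by simp only [add_mul, Finset.sum_add_distrib, hc, hd]⟩

lemma gen_mem (f : Fin (t+1) → ℕ) (j : Fin (t+1)) : f j ∈ Sg f :=
  ⟨Pi.single j 1, single_sum j f⟩

lemma B_add_mul {b : ℕ} (hb : b ∈ Sg (blowD g)) (m : ℕ) :
    b + m * g 0 ∈ Sg (blowD g) := by
  induction m with
  | zero => simpa using hb
  | succ m ih =>
      have he : g 0 ∈ Sg (blowD g) := by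
        have := gen_mem (blowD g) 0
        simpa [blowD] using this
      have := Sg_add (blowD g) ih he
      have harr : b + m * g 0 + g 0 = b + (m+1) * g 0 := by ring
      rwa [harr] at this

end

/-- Proposition 4.8: `S` is additive iff `adj(S) = Ap(B;e)`. -/
theorem stmt12 {t : ℕ} (g : Fin (t + 1) → ℕ) (hS : IsNumSgp g) :
    IsAdditive g ↔ adj g '' Sg g = Ap (blowD g) (g 0) := by
  have hp : ∀ i, 0 < g i := g_pos hS.mono hS.pos
  have hle : ∀ i, g 0 ≤ g i := fun i => hS.mono.monotone (Fin.zero_le i)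
  have heS : g 0 ∈ Sg g := gen_mem g 0
  have hstep : ∀ u ∈ Sg g, ordOf g u + 1 ≤ ordOf g (u + g 0) := by
    intro u hu
    obtain ⟨c, hc, hord⟩ := ordOf_spec hp hu
    have h1 : ∑ i, (if i = 0 then c 0 + 1 else c i) * g i = u + g 0 := by
      rw [sum_bump, hc]; ring
    have h2 := le_ordOf hp h1
    rwa [sum_bump_len, hord] at h2
  constructor
  · intro hadd
    have hiter : ∀ u ∈ Sg g, ∀ k : ℕ,
        u + k * g 0 ∈ Sg g ∧ ordOf g (u + k * g 0) = ordOf g u + k := by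
      intro u hu k
      induction k with
      | zero => simpa using hu
      | succ k ih =>
        obtain ⟨hm, ho⟩ := ih
        have harr : u + (k+1) * g 0 = (u + k * g 0) + g 0 := by ring
        rw [harr]
        refine ⟨Sg_add g hm heS, ?_⟩
        rw [hadd _ hm, ho]; ring
    ext w
    simp only [Ap, Set.mem_setOf_eq, Set.mem_image]
    constructor
    · rintro ⟨n, hn, rfl⟩
      refine ⟨adj_mem_B hp hle hn, ?_⟩
      rintro ⟨b, hb, heq⟩
      obtain ⟨d, hd⟩ := hb
      set k := ∑ i : Fin t, d i.succ with hk
      have hbk : ∑ i, d i * g i = b + k * g 0 := by rw [key_id hle d, hd]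
      have hdlen : ∑ i, d i = d 0 + k := Fin.sum_univ_succ d
      have hadjn := adj_add hp hle hn
      have h1 : ∑ i, (if i = 0 then d 0 + (ordOf g n + 1) else d i) * g i
          = n + k * g 0 := by
        rw [sum_bump, hbk]
        have hmul : (ordOf g n + 1) * g 0 = ordOf g n * g 0 + g 0 := by ring
        omega
      have h2 := le_ordOf hp h1
      rw [sum_bump_len, hdlen] at h2
      have h3 := (hiter n hn k).2
      omega
    · rintro ⟨hwB, hw⟩
      obtain ⟨d, hd⟩ := hwB
      set k := ∑ i : Fin t, d i.succ with hk
      have hbk : ∑ i, d i * g i = w + k * g 0 := by rw [key_id hle d, hd]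
      have hn' : w + k * g 0 ∈ Sg g := ⟨d, hbk⟩
      have hdlen : ∑ i, d i = d 0 + k := Fin.sum_univ_succ d
      have hlb : d 0 + k ≤ ordOf g (w + k * g 0) := hdlen ▸ le_ordOf hp hbk
      have hub : ordOf g (w + k * g 0) ≤ k := by
        by_contra hcon
        push_neg at hcon
        set n' := w + k * g 0 with hn'def
        have h1 : ordOf g n' * g 0 ≤ n' := ord_mul_le hp hle hn'
        have hadjB := adj_mem_B hp hle hn'
        set m := ordOf g n' - (k+1) with hm
        have key : w = adj g n' + (m + 1) * g 0 := by
          have h2 := adj_add hp hle hn'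
          have h3 : ordOf g n' * g 0 = k * g 0 + (m+1) * g 0 := by
            rw [← add_mul]; congr 1; omega
          rw [h3] at h2
          omega
        have hb' : adj g n' + m * g 0 ∈ Sg (blowD g) := B_add_mul hadjB m
        exact hw ⟨adj g n' + m * g 0, hb', by rw [key]; ring⟩
      have hord : ordOf g (w + k * g 0) = k :=
        le_antisymm hub (le_trans (Nat.le_add_left k (d 0)) hlb)
      refine ⟨w + k * g 0, hn', ?_⟩
      unfold adj
      rw [hord]
      omega
  · intro h u hu
    have hge := hstep u hu
    by_contra hne
    have hgt : ordOf g u + 2 ≤ ordOf g (u + g 0) := by omega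
    have huS : u + g 0 ∈ Sg g := Sg_add g hu heS
    set m := ordOf g (u + g 0) - ordOf g u - 2 with hm
    have hadj_u : adj g u ∈ Ap (blowD g) (g 0) := by
      rw [← h]; exact ⟨u, hu, rfl⟩
    have h1 := adj_add hp hle hu
    have h2 := adj_add hp hle huS
    have h3 : ordOf g (u + g 0) * g 0 = ordOf g u * g 0 + (m+1) * g 0 + g 0 := by
      have : ordOf g (u + g 0) = ordOf g u + (m + 1) + 1 := by omega
      rw [this]; ring
    have hkey : adj g u = adj g (u + g 0) + (m + 1) * g 0 := by omega
    have hb' : adj g (u + g 0) + m * g 0 ∈ Sg (blowD g) :=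
      B_add_mul (adj_mem_B hp hle huS) m
    have : adj g u = (adj g (u + g 0) + m * g 0) + g 0 := by rw [hkey]; ring
    exact hadj_u.2 ⟨adj g (u + g 0) + m * g 0, hb', this⟩
end

section
/- If S is an additive numerical semigroup whose two smallest minimal generators differ by 1 (equivalently, the blowup B equals ℕ), then d_max(S) equals the denumerant of e − 1 in ℕ with respect to the generating set D = {e, a₁−e, …, a_t−e}, where e is the multiplicity of S. -/
open Finset

section Stmt16Aux
open Finset
variable {t : ℕ}

lemma aux_one_ne_zero (ht : 0 < t) : (1 : Fin (t + 1)) ≠ 0 := by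
  obtain ⟨t', rfl⟩ : ∃ t', t = t' + 1 := ⟨t - 1, by omega⟩
  simp [Fin.ext_iff]

lemma aux_sum_erase (f : Fin (t + 1) → ℕ) (j : Fin (t + 1)) :
    ∑ i, f i = f j + ∑ i ∈ univ.erase j, f i :=
  (Finset.add_sum_erase _ f (mem_univ j)).symm

lemma aux_sum_update_mul (c : Fin (t + 1) → ℕ) (j : Fin (t + 1)) (x : ℕ)
    (f : Fin (t + 1) → ℕ) :
    ∑ i, Function.update c j x i * f i = x * f j + ∑ i ∈ univ.erase j, c i * f i := by
  have h : ∀ i, Function.update c j x i * f i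
      = Function.update (fun i => c i * f i) j (x * f j) i := by
    intro i
    by_cases hij : i = j
    · subst hij; simp
    · simp [Function.update_of_ne hij]
  rw [Finset.sum_congr rfl fun i _ => h i, Finset.sum_update_of_mem (mem_univ j),
    ← Finset.erase_eq]

lemma aux_sum_update (c : Fin (t + 1) → ℕ) (j : Fin (t + 1)) (x : ℕ) :
    ∑ i, Function.update c j x i = x + ∑ i ∈ univ.erase j, c i := by
  rw [Finset.sum_update_of_mem (mem_univ j), ← Finset.erase_eq]

/-- `LL g c = ∑_{i ≥ 1} c i * (g i - g 0)`. -/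
def LL (g c : Fin (t + 1) → ℕ) : ℕ := ∑ i : Fin t, c i.succ * (g i.succ - g 0)

lemma aux_sum_split (g c : Fin (t + 1) → ℕ) (hmono : StrictMono g) :
    ∑ i, c i * g i = (∑ i, c i) * g 0 + LL g c := by
  rw [Fin.sum_univ_succ, Fin.sum_univ_succ]
  have h : ∀ i : Fin t, c i.succ * g i.succ
      = c i.succ * g 0 + c i.succ * (g i.succ - g 0) := by
    intro i
    have hle : g 0 ≤ g i.succ := (hmono (Fin.succ_pos i)).le
    rw [← Nat.mul_add, Nat.add_sub_cancel' hle]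
  rw [Finset.sum_congr rfl fun i _ => h i, Finset.sum_add_distrib, add_mul,
    Finset.sum_mul]
  unfold LL
  ring

lemma aux_blow_split (g c : Fin (t + 1) → ℕ) :
    ∑ i, c i * blowD g i = c 0 * g 0 + LL g c := by
  rw [Fin.sum_univ_succ]
  unfold LL blowD
  simp [Fin.succ_ne_zero]

lemma aux_bridge (g c : Fin (t + 1) → ℕ) (hmono : StrictMono g) :
    ∑ i, c i * blowD g i + (∑ i, c i) * g 0 = ∑ i, c i * g i + c 0 * g 0 := by
  rw [aux_sum_split g c hmono, aux_blow_split]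
  ring

lemma aux_len_le_LL (g c : Fin (t + 1) → ℕ) (hmono : StrictMono g) :
    (∑ i : Fin t, c i.succ) ≤ LL g c := by
  apply Finset.sum_le_sum
  intro i _
  have h1 : g 0 < g i.succ := hmono (Fin.succ_pos i)
  have h2 : 1 ≤ g i.succ - g 0 := by omega
  calc c i.succ = c i.succ * 1 := (mul_one _).symm
  _ ≤ _ := Nat.mul_le_mul_left _ h2

lemma aux_gpos {g : Fin (t + 1) → ℕ} (hS : IsNumSgp g) (i : Fin (t + 1)) : 0 < g i :=
  lt_of_lt_of_le hS.pos (hS.mono.monotone (Fin.zero_le i))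

lemma aux_blow_pos {g : Fin (t + 1) → ℕ} (hS : IsNumSgp g) (i : Fin (t + 1)) :
    0 < blowD g i := by
  by_cases h : i = 0
  · subst h; simpa [blowD] using hS.pos
  · have h0 : (0 : Fin (t + 1)) < i := Fin.pos_of_ne_zero h
    have := hS.mono h0
    simp only [blowD, if_neg h]
    omega

lemma aux_fac_le {f : Fin (t + 1) → ℕ} (hf : ∀ i, 0 < f i) {n : ℕ}
    {c : Fin (t + 1) → ℕ} (hc : c ∈ Fac f n) (i : Fin (t + 1)) : c i ≤ n := by
  have h1 : c i ≤ c i * f i := Nat.le_mul_of_pos_right _ (hf i)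
  have h2 : c i * f i ≤ ∑ j, c j * f j :=
    Finset.single_le_sum (f := fun j => c j * f j) (fun j _ => Nat.zero_le _) (mem_univ i)
  exact h1.trans (h2.trans_eq hc)

lemma aux_fac_finite (f : Fin (t + 1) → ℕ) (hf : ∀ i, 0 < f i) (n : ℕ) :
    (Fac f n).Finite := by
  apply Set.Finite.subset (Set.Finite.pi fun _ : Fin (t + 1) => Set.finite_Iic n)
  intro c hc
  rw [Set.mem_pi]
  intro i _
  exact aux_fac_le hf hc i

lemma aux_len_le {f : Fin (t + 1) → ℕ} (hf : ∀ i, 0 < f i) {n : ℕ}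
    {c : Fin (t + 1) → ℕ} (hc : c ∈ Fac f n) : ∑ i, c i ≤ n := by
  calc ∑ i, c i ≤ ∑ i, c i * f i :=
        Finset.sum_le_sum fun i _ => Nat.le_mul_of_pos_right _ (hf i)
  _ = n := hc

lemma aux_ord_bdd (g : Fin (t + 1) → ℕ) (hg : ∀ i, 0 < g i) (n : ℕ) :
    BddAbove {r | ∃ c ∈ Fac g n, ∑ i, c i = r} := by
  refine ⟨n, fun r hr => ?_⟩
  obtain ⟨c, hc, rfl⟩ := hr
  exact aux_len_le hg hc

lemma aux_ord_exists {g : Fin (t + 1) → ℕ} (hg : ∀ i, 0 < g i) {n : ℕ}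
    (hn : n ∈ Sg g) : ∃ c ∈ Fac g n, ∑ i, c i = ordOf g n := by
  obtain ⟨c, hc⟩ := hn
  have hne : {r | ∃ c ∈ Fac g n, ∑ i, c i = r}.Nonempty := ⟨∑ i, c i, c, hc, rfl⟩
  exact Nat.sSup_mem hne (aux_ord_bdd g hg n)

lemma aux_le_ord {g : Fin (t + 1) → ℕ} (hg : ∀ i, 0 < g i) {n : ℕ}
    {c : Fin (t + 1) → ℕ} (hc : c ∈ Fac g n) : ∑ i, c i ≤ ordOf g n :=
  le_csSup (aux_ord_bdd g hg n) ⟨c, hc, rfl⟩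

lemma aux_add_e_mem {g : Fin (t + 1) → ℕ} {u : ℕ} (hu : u ∈ Sg g) :
    u + g 0 ∈ Sg g := by
  obtain ⟨c, hc⟩ := hu
  refine ⟨Function.update c 0 (c 0 + 1), ?_⟩
  rw [aux_sum_update_mul, add_mul, one_mul]
  rw [aux_sum_erase (fun i => c i * g i) 0] at hc
  omega

lemma aux_add_mul_e_mem {g : Fin (t + 1) → ℕ} {u : ℕ} (hu : u ∈ Sg g) (k : ℕ) :
    u + k * g 0 ∈ Sg g := by
  induction k with
  | zero => simpa using hu
  | succ k ih =>
      have : u + (k + 1) * g 0 = u + k * g 0 + g 0 := by ring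
      rw [this]
      exact aux_add_e_mem ih

lemma aux_ord_add_mul {g : Fin (t + 1) → ℕ} (hadd : IsAdditive g) {u : ℕ}
    (hu : u ∈ Sg g) (k : ℕ) : ordOf g (u + k * g 0) = ordOf g u + k := by
  induction k with
  | zero => simp
  | succ k ih =>
      have h1 : u + (k + 1) * g 0 = u + k * g 0 + g 0 := by ring
      rw [h1, hadd _ (aux_add_mul_e_mem hu k), ih]
      omega


lemma aux_two_mul (ht : 0 < t) (a b : ℕ) (f : Fin (t + 1) → ℕ) :
    ∑ i, Function.update (Function.update (fun _ : Fin (t + 1) => (0 : ℕ)) 0 a) 1 b i * f i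
      = a * f 0 + b * f 1 := by
  have h10 : (1 : Fin (t + 1)) ≠ 0 := aux_one_ne_zero ht
  have htot : ∑ i, Function.update (fun _ : Fin (t + 1) => (0 : ℕ)) 0 a i * f i = a * f 0 := by
    rw [aux_sum_update_mul]; simp
  have hsplit := aux_sum_erase
    (fun i => Function.update (fun _ : Fin (t + 1) => (0 : ℕ)) 0 a i * f i) 1
  have hval : Function.update (fun _ : Fin (t + 1) => (0 : ℕ)) 0 a 1 = 0 := by
    rw [Function.update_of_ne h10]
  rw [aux_sum_update_mul]
  simp only [hval, zero_mul, zero_add] at hsplit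
  rw [htot] at hsplit
  omega

lemma aux_two_len (ht : 0 < t) (a b : ℕ) :
    ∑ i, Function.update (Function.update (fun _ : Fin (t + 1) => (0 : ℕ)) 0 a) 1 b i = a + b := by
  have := aux_two_mul ht a b (fun _ => 1)
  simpa using this

lemma aux_adj_lt {g : Fin (t + 1) → ℕ} (hS : IsNumSgp g) (ht : 0 < t)
    (hgen : g 1 = g 0 + 1) (hadd : IsAdditive g) {n : ℕ} (hn : n ∈ Sg g)
    {c : Fin (t + 1) → ℕ} (hc : c ∈ Fac g n) (hmax : ∑ i, c i = ordOf g n) :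
    LL g c < g 0 := by
  by_contra hcon
  push_neg at hcon
  set e := g 0 with he
  set m := LL g c with hm
  set r' := ∑ i : Fin t, c i.succ with hr'
  have hr'le : r' ≤ m := aux_len_le_LL g c hS.mono
  have hsum : ∑ i, c i = c 0 + r' := Fin.sum_univ_succ c
  have hfc : (c 0 + r') * e + m = n := by
    rw [← hsum, ← aux_sum_split g c hS.mono]; exact hc
  have hord2 : ordOf g (n + (m - r') * e) = c 0 + r' + (m - r') := by
    rw [aux_ord_add_mul hadd hn (m - r'), ← hmax, hsum]
  set c2 := Function.update (Function.update (fun _ : Fin (t + 1) => (0 : ℕ)) 0 (c 0 + e + 1)) 1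
    (m - e) with hc2
  have key : (c 0 + e + 1) * e + (m - e) * (e + 1) = n + (m - r') * e := by
    obtain ⟨q, hq⟩ : ∃ q, m = e + q := ⟨m - e, by omega⟩
    obtain ⟨K, hK⟩ : ∃ K, m = r' + K := ⟨m - r', by omega⟩
    have h1 : m - e = q := by omega
    have h2 : m - r' = K := by omega
    have hK2 : r' + K = e + q := by omega
    rw [h1, h2, ← hfc, hq]
    zify at hK2 ⊢
    linear_combination (-(e : ℤ)) * hK2
  have hmem2 : c2 ∈ Fac g (n + (m - r') * e) := by
    show ∑ i, c2 i * g i = n + (m - r') * e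
    rw [hc2, aux_two_mul ht, hgen, ← he]
    exact key
  have hle2 := aux_le_ord (aux_gpos hS) hmem2
  rw [hord2, hc2, aux_two_len ht] at hle2
  omega


lemma aux_blowD_zero (g : Fin (t + 1) → ℕ) : blowD g 0 = g 0 := by simp [blowD]

lemma aux_blowD_one {g : Fin (t + 1) → ℕ} (ht : 0 < t) (hgen : g 1 = g 0 + 1) :
    blowD g 1 = 1 := by
  rw [blowD, if_neg (aux_one_ne_zero ht), hgen]
  omega

lemma aux_phi_mem {g : Fin (t + 1) → ℕ} (hmono : StrictMono g) {n r m : ℕ}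
    {c : Fin (t + 1) → ℕ} (hc : c ∈ Fac g n) (hlen : ∑ i, c i = r)
    (hm : r * g 0 + m = n) : Function.update c 0 0 ∈ Fac (blowD g) m := by
  show ∑ i, Function.update c 0 0 i * blowD g i = m
  have hb := aux_bridge g c hmono
  rw [hc, hlen] at hb
  have h1 := aux_sum_update_mul c 0 0 (blowD g)
  have h2 := aux_sum_erase (fun i => c i * blowD g i) 0
  rw [aux_blowD_zero] at h1 h2
  simp only [zero_mul, zero_add] at h1 h2
  omega

lemma aux_phi_inj {r : ℕ} {c c' : Fin (t + 1) → ℕ}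
    (hlen : ∑ i, c i = r) (hlen' : ∑ i, c' i = r)
    (h : Function.update c 0 0 = Function.update c' 0 0) : c = c' := by
  have hne : ∀ i : Fin (t + 1), i ≠ 0 → c i = c' i := by
    intro i hi
    have := congrFun h i
    rwa [Function.update_of_ne hi, Function.update_of_ne hi] at this
  have he : ∑ i ∈ univ.erase 0, c i = ∑ i ∈ univ.erase 0, c' i :=
    Finset.sum_congr rfl fun i hi => hne i (Finset.ne_of_mem_erase hi)
  have h1 := aux_sum_erase c 0
  have h2 := aux_sum_erase c' 0
  funext i
  by_cases hi : i = 0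
  · subst hi; omega
  · exact hne i hi

lemma aux_psi_mem {g : Fin (t + 1) → ℕ} (ht : 0 < t) (hgen : g 1 = g 0 + 1)
    {m k : ℕ} {c : Fin (t + 1) → ℕ} (hc : c ∈ Fac (blowD g) m) :
    Function.update c 1 (c 1 + k) ∈ Fac (blowD g) (m + k) := by
  show ∑ i, Function.update c 1 (c 1 + k) i * blowD g i = m + k
  have h1 := aux_sum_update_mul c 1 (c 1 + k) (blowD g)
  have h2 := aux_sum_erase (fun i => c i * blowD g i) 1
  rw [aux_blowD_one ht hgen, mul_one] at h1 h2
  have hcm : ∑ i, c i * blowD g i = m := hc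
  omega

lemma aux_psi_inj {k : ℕ} {c c' : Fin (t + 1) → ℕ}
    (h : Function.update c 1 (c 1 + k) = Function.update c' 1 (c' 1 + k)) :
    c = c' := by
  funext i
  by_cases hi : i = 1
  · subst hi
    have := congrFun h 1
    rw [Function.update_self, Function.update_self] at this
    omega
  · have := congrFun h i
    rwa [Function.update_of_ne hi, Function.update_of_ne hi] at this

lemma aux_dmaxEl_le {g : Fin (t + 1) → ℕ} (hS : IsNumSgp g) (ht : 0 < t)
    (hgen : g 1 = g 0 + 1) (hadd : IsAdditive g) {n : ℕ} (hn : n ∈ Sg g) :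
    dmaxEl g n ≤ denum (blowD g) (g 0 - 1) := by
  obtain ⟨c₀, hc₀, hc₀len⟩ := aux_ord_exists (aux_gpos hS) hn
  have hmlt : LL g c₀ < g 0 := aux_adj_lt hS ht hgen hadd hn hc₀ hc₀len
  have hre : ordOf g n * g 0 + LL g c₀ = n := by
    rw [← hc₀len, ← aux_sum_split g c₀ hS.mono]; exact hc₀
  set m := LL g c₀ with hm
  have h1 : dmaxEl g n ≤ (Fac (blowD g) m).ncard := by
    refine Set.ncard_le_ncard_of_injOn (fun c => Function.update c 0 0) ?_ ?_
      (aux_fac_finite _ (aux_blow_pos hS) m)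
    · rintro c ⟨hcf, hcl⟩
      exact aux_phi_mem hS.mono hcf hcl hre
    · rintro c ⟨hcf, hcl⟩ c' ⟨hcf', hcl'⟩ h
      exact aux_phi_inj hcl (hcl.symm ▸ hcl') h
  have h2 : (Fac (blowD g) m).ncard ≤ (Fac (blowD g) (g 0 - 1)).ncard := by
    have hmk : m + (g 0 - 1 - m) = g 0 - 1 := by omega
    refine Set.ncard_le_ncard_of_injOn
      (fun c => Function.update c 1 (c 1 + (g 0 - 1 - m))) ?_ ?_
      (aux_fac_finite _ (aux_blow_pos hS) _)
    · intro c hc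
      have := aux_psi_mem ht hgen (k := g 0 - 1 - m) hc
      rwa [hmk] at this
    · intro c _ c' _ h
      exact aux_psi_inj h
  exact h1.trans h2


lemma aux_dmaxEl_n0 {g : Fin (t + 1) → ℕ} (hS : IsNumSgp g) (ht : 0 < t)
    (hgen : g 1 = g 0 + 1) :
    g 0 * g 0 - 1 ∈ Sg g ∧ dmaxEl g (g 0 * g 0 - 1) = denum (blowD g) (g 0 - 1) := by
  have hpos := hS.pos
  have hgg : 1 ≤ g 0 * g 0 := Nat.mul_pos hpos hpos
  have hsq : (g 0 - 1) * g 0 + (g 0 - 1) = g 0 * g 0 - 1 := by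
    obtain ⟨a, ha⟩ : ∃ a, g 0 = a + 1 := ⟨g 0 - 1, by omega⟩
    rw [ha]
    have h1 : a + 1 - 1 = a := by omega
    rw [h1]
    have h2 : (a + 1) * (a + 1) = a * (a + 1) + a + 1 := by ring
    omega
  set w := Function.update (fun _ : Fin (t + 1) => (0 : ℕ)) 1 (g 0 - 1) with hw
  have hwsum : ∑ i, w i * g i = g 0 * g 0 - 1 := by
    rw [hw, aux_sum_update_mul, hgen]
    simp only [zero_mul, Finset.sum_const_zero, add_zero]
    have h4 : (g 0 - 1) * (g 0 + 1) = (g 0 - 1) * g 0 + (g 0 - 1) := by ring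
    omega
  have hwlen : ∑ i, w i = g 0 - 1 := by
    rw [hw, aux_sum_update]
    simp
  have hmem : g 0 * g 0 - 1 ∈ Sg g := ⟨w, hwsum⟩
  have hord : ordOf g (g 0 * g 0 - 1) = g 0 - 1 := by
    obtain ⟨cm, hcm, hcml⟩ := aux_ord_exists (aux_gpos hS) hmem
    have hsp := aux_sum_split g cm hS.mono
    have hcm' : ∑ i, cm i * g i = g 0 * g 0 - 1 := hcm
    have hle1 : ∑ i, cm i ≤ g 0 - 1 := by
      by_contra hcon
      push_neg at hcon
      have h5' : g 0 ≤ ∑ i, cm i := by omega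
      have h5 : g 0 * g 0 ≤ (∑ i, cm i) * g 0 := Nat.mul_le_mul_right _ h5'
      omega
    have hle2 : g 0 - 1 ≤ ordOf g (g 0 * g 0 - 1) := by
      have h6 := aux_le_ord (aux_gpos hS) (show w ∈ Fac g (g 0 * g 0 - 1) from hwsum)
      rw [hwlen] at h6
      exact h6
    omega
  have hinj : Set.InjOn (fun c => Function.update c 0 0)
      {c | c ∈ Fac g (g 0 * g 0 - 1) ∧ ∑ i, c i = ordOf g (g 0 * g 0 - 1)} := by
    rintro c ⟨hcf, hcl⟩ c' ⟨hcf', hcl'⟩ h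
    exact aux_phi_inj hcl (hcl.symm ▸ hcl') h
  have himg : (fun c => Function.update c 0 0) ''
      {c | c ∈ Fac g (g 0 * g 0 - 1) ∧ ∑ i, c i = ordOf g (g 0 * g 0 - 1)}
      = Fac (blowD g) (g 0 - 1) := by
    apply Set.Subset.antisymm
    · rintro _ ⟨c, ⟨hcf, hcl⟩, rfl⟩
      exact aux_phi_mem hS.mono hcf hcl (by rw [hord]; exact hsq)
    · intro c' hc'
      have hfacD : ∑ i, c' i * blowD g i = g 0 - 1 := hc'
      have hDer := aux_sum_erase (fun i => c' i * blowD g i) 0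
      rw [aux_blowD_zero] at hDer
      have hc'0 : c' 0 = 0 := by
        by_contra h0
        have h1 : g 0 ≤ c' 0 * g 0 := Nat.le_mul_of_pos_left _ (Nat.pos_of_ne_zero h0)
        have h2 : 0 ≤ ∑ i ∈ univ.erase 0, c' i * blowD g i := Nat.zero_le _
        omega
      have hslen : ∑ i, c' i ≤ g 0 - 1 := aux_len_le (aux_blow_pos hS) hc'
      have hs := aux_sum_erase c' 0
      have he2 : ∑ i ∈ univ.erase 0, c' i = ∑ i, c' i := by omega
      refine ⟨Function.update c' 0 (g 0 - 1 - ∑ i, c' i), ⟨?_, ?_⟩, ?_⟩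
      · show ∑ i, Function.update c' 0 (g 0 - 1 - ∑ i, c' i) i * g i = g 0 * g 0 - 1
        rw [aux_sum_update_mul]
        have hsplit : ∑ i ∈ univ.erase 0, c' i * g i
            = ∑ i ∈ univ.erase 0, c' i * blowD g i
              + (∑ i ∈ univ.erase 0, c' i) * g 0 := by
          have hpt : ∀ i ∈ univ.erase 0, c' i * g i
              = c' i * blowD g i + c' i * g 0 := by
            intro i hi
            have hne := Finset.ne_of_mem_erase hi
            have hgi : blowD g i + g 0 = g i := by
              rw [blowD, if_neg hne]
              have := hS.mono (Fin.pos_of_ne_zero hne)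
              omega
            rw [← hgi]
            ring
          rw [Finset.sum_congr rfl hpt, Finset.sum_add_distrib, ← Finset.sum_mul]
        have hks : (g 0 - 1 - ∑ i, c' i) + ∑ i, c' i = g 0 - 1 := by omega
        have hprod : (g 0 - 1 - ∑ i, c' i) * g 0 + (∑ i, c' i) * g 0
            = (g 0 - 1) * g 0 := by rw [← add_mul, hks]
        rw [hc'0, zero_mul, zero_add] at hDer
        have heD : ∑ i ∈ univ.erase 0, c' i * blowD g i = g 0 - 1 := by omega
        rw [hsplit, he2, heD]
        omega
      · show ∑ i, Function.update c' 0 (g 0 - 1 - ∑ i, c' i) i = ordOf g (g 0 * g 0 - 1)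
        rw [aux_sum_update, hord, he2]
        omega
      · funext i
        by_cases hi : i = 0
        · subst hi
          simp [hc'0]
        · simp [Function.update_of_ne hi]
  constructor
  · exact hmem
  · calc dmaxEl g (g 0 * g 0 - 1)
        = ((fun c => Function.update c 0 0) ''
          {c | c ∈ Fac g (g 0 * g 0 - 1) ∧ ∑ i, c i = ordOf g (g 0 * g 0 - 1)}).ncard :=
          (Set.ncard_image_of_injOn hinj).symm
    _ = denum (blowD g) (g 0 - 1) := by rw [himg]; rfl

end Stmt16Aux

/-- Proposition 4.14: if `S` is additive and its two smallest minimal generators differ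
by 1, then `d_max(S) = d(e - 1; D)`. -/
theorem stmt16 {t : ℕ} (g : Fin (t + 1) → ℕ) (hS : IsNumSgp g) (ht : 0 < t)
    (hgen : g 1 = g 0 + 1) (hadd : IsAdditive g) :
    dmax g = denum (blowD g) (g 0 - 1) := by
  obtain ⟨hmem, heq⟩ := aux_dmaxEl_n0 hS ht hgen
  have hub : ∀ x ∈ {m | ∃ n ∈ Sg g, dmaxEl g n = m}, x ≤ denum (blowD g) (g 0 - 1) := by
    rintro x ⟨n, hn, rfl⟩
    exact aux_dmaxEl_le hS ht hgen hadd hn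
  have hmem' : denum (blowD g) (g 0 - 1) ∈ {m | ∃ n ∈ Sg g, dmaxEl g n = m} :=
    ⟨_, hmem, heq⟩
  exact le_antisymm (csSup_le ⟨_, hmem'⟩ hub) (le_csSup ⟨_, hub⟩ hmem')
end
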